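/- For every integer k ≥ 0, the k-th moment of Y satisfies E[Y^k] ≤ 2·k!/α^k, where α := log(1/√(1 − p²)). -/

import Mathlib

open MeasureTheory Filter

/-- The Bernoulli(p) measure on `Bool`: `true` has probability `p`. -/
noncomputable def bern (p : ℝ) : Measure Bool :=
  ENNReal.ofReal p • Measure.dirac true + ENNReal.ofReal (1 - p) • Measure.dirac false

/-- The law of a random subset of `{0, …, N}` where each element is included
independently with probability `p`, encoded by indicator functions. -/
noncomputable def prodBern (p : ℝ) (N : ℕ) : Measure (Fin (N + 1) → Bool) :=
  Measure.pi fun _ => bern p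

/-- `n` belongs to the sumset `A + A`, where `A ⊆ {0,…,N}` is encoded by `ω`. -/
def inSumset {N : ℕ} (ω : Fin (N + 1) → Bool) (n : ℕ) : Prop :=
  ∃ a b : Fin (N + 1), ω a = true ∧ ω b = true ∧ (a : ℕ) + (b : ℕ) = n

/-- `Y`: the number of integers in `{0,…,N}` missing from `A + A`. -/
noncomputable def Ycount (N : ℕ) (ω : Fin (N + 1) → Bool) : ℕ :=
  {n : ℕ | n ≤ N ∧ ¬ inSumset ω n}.ncard

/-- `Z`: the number of integers in `{N+1,…,2N}` missing from `A + A`. -/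
noncomputable def Zcount (N : ℕ) (ω : Fin (N + 1) → Bool) : ℕ :=
  {n : ℕ | N + 1 ≤ n ∧ n ≤ 2 * N ∧ ¬ inSumset ω n}.ncard

/-- `W`: the number of integers in `{0,…,2N}` missing from `A + A`. -/
noncomputable def Wcount (N : ℕ) (ω : Fin (N + 1) → Bool) : ℕ :=
  {n : ℕ | n ≤ 2 * N ∧ ¬ inSumset ω n}.ncard

/-- `Ỹ`: the number of integers in `{0,…,⌊N/2⌋}` missing from `A + A`. -/
noncomputable def Ytilde (N : ℕ) (ω : Fin (N + 1) → Bool) : ℕ :=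
  {n : ℕ | n ≤ N / 2 ∧ ¬ inSumset ω n}.ncard

/-- `Z̃`: the number of integers in `{⌊3N/2⌋+1,…,2N}` missing from `A + A`. -/
noncomputable def Ztilde (N : ℕ) (ω : Fin (N + 1) → Bool) : ℕ :=
  {n : ℕ | 3 * N / 2 + 1 ≤ n ∧ n ≤ 2 * N ∧ ¬ inSumset ω n}.ncard

/-- A string of `k` bits has no two consecutive ones. -/
def noTwoOnes {k : ℕ} (x : Fin k → Bool) : Prop :=
  ∀ i : ℕ, ∀ hi : i + 1 < k, ¬(x ⟨i, Nat.lt_of_succ_lt hi⟩ = true ∧ x ⟨i + 1, hi⟩ = true)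

/-- `a_k`: the probability that `k` i.i.d. Bernoulli(p) bits contain no two
consecutive 1's (with `a_0 = 1`). -/
noncomputable def aseq (p : ℝ) (k : ℕ) : ℝ :=
  ((Measure.pi fun _ : Fin k => bern p) {x | noTwoOnes x}).toReal

section Aux
open Finset
open scoped ENNReal

lemma bern_apply (p : ℝ) (s : Set Bool) :
    bern p s = (ENNReal.ofReal p) * s.indicator 1 true
      + (ENNReal.ofReal (1-p)) * s.indicator 1 false := by
  simp [bern, Measure.dirac_apply, Measure.add_apply]

lemma bern_isProb (p : ℝ) (hp0 : 0 ≤ p) (hp1 : p ≤ 1) : IsProbabilityMeasure (bern p) := by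
  constructor
  rw [bern_apply]
  simp only [Set.indicator_univ, Pi.one_apply, mul_one]
  rw [← ENNReal.ofReal_add hp0 (by linarith)]
  norm_num

lemma bern_true (p : ℝ) : bern p {true} = ENNReal.ofReal p := by
  simp [bern_apply, Set.indicator_apply]

lemma bern_false (p : ℝ) : bern p {false} = ENNReal.ofReal (1-p) := by
  simp [bern_apply, Set.indicator_apply]

lemma bern_univ (p : ℝ) (hp0 : 0 ≤ p) (hp1 : p ≤ 1) : bern p Set.univ = 1 := by
  rw [bern_apply]
  simp only [Set.indicator_univ, Pi.one_apply, mul_one]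
  rw [← ENNReal.ofReal_add hp0 (by linarith)]
  norm_num


instance bern_finite (p : ℝ) : IsFiniteMeasure (bern p) := by
  constructor
  rw [bern_apply]
  simp only [Set.indicator_univ, Pi.one_apply, mul_one]
  exact ENNReal.add_lt_top.mpr ⟨ENNReal.ofReal_lt_top, ENNReal.ofReal_lt_top⟩

lemma marginal_bound {p : ℝ} (hp0 : 0 < p) (hp1 : p < 1) {N n : ℕ} (hn : n ≤ N) :
    prodBern p N {ω | ¬ inSumset ω n} ≤
      ENNReal.ofReal (Real.sqrt (1 - p^2) ^ (n+1)) := by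
  classical
  set x := Real.sqrt (1 - p^2) with hxdef
  set h := (n+1)/2 with hh
  set uu : (Fin h → Bool) → ℕ → Bool :=
    fun u j => if hj : j < h then u ⟨j, hj⟩ else false with huu
  set Tn : (Fin h → Bool) → ℕ → Set Bool := fun u m =>
    if 2*m < n then {uu u m}
    else if 2*m = n then {false}
    else if m ≤ n then (if uu u (n - m) then {false} else Set.univ)
    else Set.univ with hTn
  have hsub : {ω : Fin (N+1) → Bool | ¬ inSumset ω n} ⊆
      ⋃ u : Fin h → Bool, Set.univ.pi (fun i => Tn u (i:ℕ)) := by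
    intro ω hω
    simp only [Set.mem_setOf_eq] at hω
    refine Set.mem_iUnion.2 ⟨fun j => ω ⟨j, by have := j.2; omega⟩, fun i _ => ?_⟩
    by_cases h1 : 2*(i:ℕ) < n
    · have hih : (i:ℕ) < h := by omega
      simp only [hTn, if_pos h1, Set.mem_singleton_iff, huu, dif_pos hih]
    · by_cases h2 : 2*(i:ℕ) = n
      · simp only [hTn, if_neg h1, if_pos h2, Set.mem_singleton_iff]
        by_contra hne
        have : ω i = true := by cases hc : ω i <;> simp_all
        exact hω ⟨i, i, this, this, by omega⟩
      · by_cases h3 : (i:ℕ) ≤ n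
        · simp only [hTn, if_neg h1, if_neg h2, if_pos h3]
          have hnih : n - (i:ℕ) < h := by omega
          by_cases h4 : uu (fun j => ω ⟨j, by have := j.2; omega⟩) (n - i) = true
          · rw [if_pos h4]
            simp only [huu, dif_pos hnih] at h4
            simp only [Set.mem_singleton_iff]
            by_contra hne
            have hωi : ω i = true := by cases hc : ω i <;> simp_all
            exact hω ⟨⟨n - i, by omega⟩, i, h4, hωi, by simp; omega⟩
          · rw [if_neg h4]; trivial
        · simp only [hTn, if_neg h1, if_neg h2, if_neg h3]; trivial
  set Gl : Bool → ℝ≥0∞ := fun b => if b then ENNReal.ofReal p else ENNReal.ofReal (1-p) with hGl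
  set Gu : Bool → ℝ≥0∞ := fun b => if b then ENNReal.ofReal (1-p) else 1 with hGu
  set c : ℝ≥0∞ := if n % 2 = 0 then ENNReal.ofReal (1-p) else 1 with hc
  have key : ∀ u : Fin h → Bool, prodBern p N (Set.univ.pi (fun i => Tn u (i:ℕ)))
      = c * ∏ j : Fin h, (Gl (u j) * Gu (u j)) := by
    intro u
    have hpi : prodBern p N (Set.univ.pi (fun i => Tn u (i:ℕ)))
        = ∏ i : Fin (N+1), bern p (Tn u (i:ℕ)) := Measure.pi_pi _ _
    rw [hpi, Fin.prod_univ_eq_prod_range (fun m => bern p (Tn u m)) (N+1)]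
    have e1 : (∏ m ∈ Ico 0 (n+1), bern p (Tn u m)) * (∏ m ∈ Ico (n+1) (N+1), bern p (Tn u m))
        = ∏ m ∈ range (N+1), bern p (Tn u m) := by
      rw [range_eq_Ico]
      exact prod_Ico_consecutive _ (by omega) (by omega)
    have etail : (∏ m ∈ Ico (n+1) (N+1), bern p (Tn u m)) = 1 := by
      apply prod_eq_one
      intro m hm
      rw [mem_Ico] at hm
      have h1 : ¬ (2*m < n) := by omega
      have h2 : ¬ (2*m = n) := by omega
      have h3 : ¬ (m ≤ n) := by omega
      have : Tn u m = Set.univ := by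
        simp only [hTn]
        rw [if_neg h1, if_neg h2, if_neg h3]
      rw [this, bern_univ p hp0.le hp1.le]
    have e2 : (∏ m ∈ Ico 0 h, bern p (Tn u m)) * (∏ m ∈ Ico h (n+1), bern p (Tn u m))
        = ∏ m ∈ Ico 0 (n+1), bern p (Tn u m) := prod_Ico_consecutive _ (by omega) (by omega)
    have elow : (∏ m ∈ Ico 0 h, bern p (Tn u m)) = ∏ m ∈ range h, Gl (uu u m) := by
      rw [range_eq_Ico]
      apply prod_congr rfl
      intro m hm
      rw [mem_Ico] at hm
      have hm2 : 2*m < n := by omega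
      simp only [hTn, if_pos hm2]
      cases hb : uu u m
      · simp only [hb, Bool.false_eq_true, if_false, hGl]
        exact bern_false p
      · simp only [hb, if_true, hGl]
        exact bern_true p
    have hupgen : ∀ a, n < 2*a →
        (∏ m ∈ Ico a (n+1), bern p (Tn u m)) = ∏ m ∈ range (n+1-a), Gu (uu u m) := by
      intro a ha
      apply prod_nbij' (fun m => n - m) (fun j => n - j)
      · intro m hm; rw [mem_Ico] at hm; rw [mem_range]; omega
      · intro j hj; rw [mem_range] at hj; rw [mem_Ico]; omega
      · intro m hm; rw [mem_Ico] at hm; omega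
      · intro j hj; rw [mem_range] at hj; omega
      · intro m hm
        rw [mem_Ico] at hm
        have h1 : ¬ (2*m < n) := by omega
        have h2 : ¬ (2*m = n) := by omega
        have h3 : m ≤ n := by omega
        simp only [hTn, if_neg h1, if_neg h2, if_pos h3]
        cases hb : uu u (n - m)
        · simp only [hb, Bool.false_eq_true, if_false, hGu]
          exact bern_univ p hp0.le hp1.le
        · simp only [hb, if_true, hGu]
          exact bern_false p
    have eup : (∏ m ∈ Ico h (n+1), bern p (Tn u m)) = c * ∏ m ∈ range h, Gu (uu u m) := by
      rcases Nat.even_or_odd n with he | ho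
      · have hn2 : n % 2 = 0 := Nat.even_iff.mp he
        have hhn : 2*h = n := by omega
        have hlt : h < n + 1 := by omega
        rw [prod_eq_prod_Ico_succ_bot hlt]
        have hc1 : ¬ (2*h < n) := by omega
        have hc2 : 2*h = n := by omega
        have hmid : bern p (Tn u h) = ENNReal.ofReal (1-p) := by
          simp only [hTn]
          rw [if_neg hc1, if_pos hc2, bern_false]
        rw [hmid, hupgen (h+1) (by omega)]
        have hnh : n + 1 - (h+1) = h := by omega
        rw [hnh, hc, if_pos hn2]
      · have hn2 : ¬ (n % 2 = 0) := by
          rcases ho with ⟨t, ht⟩; omega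
        have hhn : 2*h = n+1 := by omega
        rw [hupgen h (by omega)]
        have hnh : n + 1 - h = h := by omega
        rw [hnh, hc, if_neg hn2, one_mul]
    rw [← e1, etail, mul_one, ← e2, elow, eup]
    have efin : ∏ j : Fin h, (Gl (u j) * Gu (u j))
        = ∏ m ∈ range h, (Gl (uu u m) * Gu (uu u m)) := by
      rw [← Fin.prod_univ_eq_prod_range (fun m => Gl (uu u m) * Gu (uu u m)) h]
      apply prod_congr rfl
      intro j _
      have hj := j.2
      simp only [huu, dif_pos hj, Fin.eta]
    rw [efin, prod_mul_distrib]
    ring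
  have hS : ∑ b : Bool, Gl b * Gu b = ENNReal.ofReal (1 - p^2) := by
    rw [Fintype.sum_bool]
    simp only [hGl, hGu, if_true, Bool.false_eq_true, if_false]
    rw [mul_one, ← ENNReal.ofReal_mul hp0.le,
      ← ENNReal.ofReal_add (by nlinarith) (by linarith)]
    ring_nf
  have hsum : ∑ u : Fin h → Bool, prodBern p N (Set.univ.pi (fun i => Tn u (i:ℕ)))
      = c * (ENNReal.ofReal (1 - p^2))^h := by
    simp only [key]
    rw [← Finset.mul_sum]
    congr 1
    have hps := Finset.prod_univ_sum (fun _ : Fin h => (univ : Finset Bool))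
      (fun _ b => Gl b * Gu b)
    rw [Fintype.piFinset_univ] at hps
    rw [← hps, ← hS]
    rw [Finset.prod_const, Finset.card_univ, Fintype.card_fin]
  have hmain : prodBern p N {ω | ¬ inSumset ω n} ≤ c * (ENNReal.ofReal (1 - p^2))^h := by
    rw [← hsum]
    exact (measure_mono hsub).trans (measure_iUnion_fintype_le _ _)
  refine hmain.trans ?_
  have hx0 : (0:ℝ) ≤ x := Real.sqrt_nonneg _
  have h1p2 : (0:ℝ) ≤ 1 - p^2 := by nlinarith
  have hxsq : x^2 = 1 - p^2 := Real.sq_sqrt h1p2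
  have hof : (ENNReal.ofReal (1 - p^2))^h = ENNReal.ofReal (x^(2*h)) := by
    rw [← hxsq, pow_mul]
    exact (ENNReal.ofReal_pow (by positivity) h).symm
  rw [hof]
  rcases Nat.even_or_odd n with he | ho
  · have hn2 : n % 2 = 0 := Nat.even_iff.mp he
    have hhn : 2*h = n := by omega
    rw [hc, if_pos hn2, hhn]
    rw [← ENNReal.ofReal_mul (by linarith)]
    apply ENNReal.ofReal_le_ofReal
    have hplex : 1 - p ≤ x := by
      rw [hxdef]
      rw [Real.le_sqrt (by linarith) (by nlinarith)]
      nlinarith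
    calc (1-p) * x^n ≤ x * x^n := by
          apply mul_le_mul_of_nonneg_right hplex (by positivity)
      _ = x^(n+1) := by ring
  · have hn2 : ¬ (n % 2 = 0) := by rcases ho with ⟨t, ht⟩; omega
    have hhn : 2*h = n+1 := by omega
    rw [hc, if_neg hn2, hhn, one_mul]
lemma measurableSet_notInSumset (N n : ℕ) :
    MeasurableSet {ω : Fin (N+1) → Bool | ¬ inSumset ω n} := by
  have : {ω : Fin (N+1) → Bool | inSumset ω n} =
      ⋃ a : Fin (N+1), ⋃ b : Fin (N+1), ⋃ (_ : (a:ℕ) + (b:ℕ) = n),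
        ((fun ω : Fin (N+1) → Bool => ω a) ⁻¹' {true} ∩
         (fun ω : Fin (N+1) → Bool => ω b) ⁻¹' {true}) := by
    ext ω
    simp only [Set.mem_setOf_eq, inSumset, Set.mem_iUnion, Set.mem_inter_iff,
      Set.mem_preimage, Set.mem_singleton_iff]
    tauto
  have hms : MeasurableSet {ω : Fin (N+1) → Bool | inSumset ω n} := by
    rw [this]
    refine MeasurableSet.iUnion fun a => MeasurableSet.iUnion fun b =>
      MeasurableSet.iUnion fun _ => MeasurableSet.inter ?_ ?_
    · exact (measurable_pi_apply a) (measurableSet_singleton true)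
    · exact (measurable_pi_apply b) (measurableSet_singleton true)
  exact hms.compl

open scoped Classical in
lemma ycount_eq (N : ℕ) (ω : Fin (N+1) → Bool) :
    (Ycount N ω : ℝ) = ∑ n ∈ range (N+1), (if inSumset ω n then (0:ℝ) else 1) := by
  classical
  have hset : {n : ℕ | n ≤ N ∧ ¬ inSumset ω n} =
      ↑((range (N+1)).filter (fun n => ¬ inSumset ω n)) := by
    ext n
    simp [Nat.lt_succ_iff]
  rw [Ycount, hset, Set.ncard_coe_finset, Finset.card_filter]
  push_cast
  refine Finset.sum_congr rfl fun n _ => ?_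
  by_cases hP : inSumset ω n <;> simp [hP]

open scoped Classical in
lemma moment_eq {p : ℝ} (hp0 : 0 < p) (hp1 : p < 1) (N k : ℕ) :
    ∫ ω, (Ycount N ω : ℝ)^k ∂ prodBern p N
      = ∑ g ∈ Fintype.piFinset (fun _ : Fin k => range (N+1)),
          (prodBern p N (⋂ i, {ω | ¬ inSumset ω (g i)})).toReal := by
  classical
  haveI : IsProbabilityMeasure (bern p) := bern_isProb p hp0.le hp1.le
  haveI : IsProbabilityMeasure (prodBern p N) := by
    unfold prodBern; infer_instance
  have hpt : ∀ ω : Fin (N+1) → Bool, (Ycount N ω : ℝ)^k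
      = ∑ g ∈ Fintype.piFinset (fun _ : Fin k => range (N+1)),
          Set.indicator (⋂ i, {ω' : Fin (N+1) → Bool | ¬ inSumset ω' (g i)})
            (1 : (Fin (N+1) → Bool) → ℝ) ω := by
    intro ω
    rw [ycount_eq]
    have hpow : (∑ n ∈ range (N+1), (if inSumset ω n then (0:ℝ) else 1))^k
        = ∏ _i : Fin k, ∑ n ∈ range (N+1), (if inSumset ω n then (0:ℝ) else 1) := by
      rw [Finset.prod_const, Finset.card_univ, Fintype.card_fin]
    rw [hpow, Finset.prod_univ_sum]
    refine Finset.sum_congr rfl fun g _ => ?_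
    by_cases hall : ∀ i : Fin k, ¬ inSumset ω (g i)
    · rw [Finset.prod_eq_one (fun i _ => by rw [if_neg (hall i)])]
      rw [Set.indicator_of_mem (by simpa [Set.mem_iInter] using hall)]
      rfl
    · push_neg at hall
      obtain ⟨i0, hi0⟩ := hall
      rw [Finset.prod_eq_zero (Finset.mem_univ i0) (by rw [if_pos hi0])]
      rw [Set.indicator_of_notMem (by simp [Set.mem_iInter]; exact ⟨i0, hi0⟩)]
  simp_rw [hpt]
  rw [integral_finset_sum]
  · refine Finset.sum_congr rfl fun g _ => ?_
    exact integral_indicator_one (MeasurableSet.iInter fun i => measurableSet_notInSumset N (g i))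
  · intro g _
    exact (integrable_const (1:ℝ)).indicator
      (MeasurableSet.iInter fun i => measurableSet_notInSumset N (g i))

lemma exp_hasDeriv (α t : ℝ) :
    HasDerivAt (fun s : ℝ => -Real.exp (-α * s)) (α * Real.exp (-α * t)) t := by
  have h1 : HasDerivAt (fun s : ℝ => -α * s) (-α) t := by
    simpa using (hasDerivAt_id t).const_mul (-α)
  have h3 : HasDerivAt (fun s : ℝ => -Real.exp (-α * s)) (-(Real.exp (-α * t) * -α)) t :=
    ((Real.hasDerivAt_exp (-α*t)).comp t h1).neg
  convert h3 using 1
  ring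

lemma exp_interval_integral (α a b : ℝ) :
    ∫ t in a..b, α * Real.exp (-α * t) = Real.exp (-α*a) - Real.exp (-α*b) := by
  have hc : Continuous fun t : ℝ => α * Real.exp (-α * t) := by continuity
  rw [intervalIntegral.integral_eq_sub_of_hasDerivAt (fun t _ => exp_hasDeriv α t)
    (hc.intervalIntegrable a b)]
  ring

lemma exp_Ioi_integral {α : ℝ} (hα : 0 < α) (c : ℝ) :
    ∫ t in Set.Ioi c, α * Real.exp (-α * t) = Real.exp (-α * c) := by
  have htend : Tendsto (fun t : ℝ => -Real.exp (-α * t)) atTop (nhds 0) := by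
    have h1 : Tendsto (fun t : ℝ => α * t) atTop atTop :=
      Tendsto.const_mul_atTop hα tendsto_id
    have h2 : Tendsto (fun t : ℝ => Real.exp (-(α * t))) atTop (nhds 0) :=
      Real.tendsto_exp_neg_atTop_nhds_zero.comp h1
    have h3 := h2.neg
    simp only [neg_zero] at h3
    convert h3 using 2 with t
    ring_nf
  have hcont : Continuous fun s : ℝ => -Real.exp (-α * s) := by continuity
  have := integral_Ioi_of_hasDerivAt_of_nonneg (a := c) (l := 0) (hcont.continuousWithinAt)
    (fun t _ => exp_hasDeriv α t)
    (fun t _ => by positivity) htend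
  rw [this]
  ring

lemma integrableOn_poly_exp {α : ℝ} (hα : 0 < α) (k : ℕ) :
    IntegrableOn (fun t : ℝ => α * (t^k * Real.exp (-α * t))) (Set.Ioi (0:ℝ)) volume := by
  have h0 := integrableOn_rpow_mul_exp_neg_mul_rpow (p := 1) (s := (k:ℝ))
    (lt_of_lt_of_le (by norm_num) (Nat.cast_nonneg k)) one_pos hα
  have heq : (fun t : ℝ => t ^ ((k:ℕ):ℝ) * Real.exp (-α * t ^ (1:ℝ)))
      = fun t : ℝ => t^k * Real.exp (-α*t) := by
    funext t; rw [Real.rpow_natCast, Real.rpow_one]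
  rw [heq] at h0
  exact h0.const_mul α

lemma integral_poly_exp {α : ℝ} (hα : 0 < α) (k : ℕ) :
    ∫ t in Set.Ioi (0:ℝ), α * (t^k * Real.exp (-α * t)) = (k.factorial : ℝ) / α^k := by
  rw [integral_const_mul]
  have h := Real.integral_rpow_mul_exp_neg_mul_Ioi (a := (k:ℝ)+1) (r := α) (by positivity) hα
  simp only [add_sub_cancel_right] at h
  have heq : (fun t : ℝ => t ^ (k:ℝ) * Real.exp (-(α*t)))
      = fun t : ℝ => t^k * Real.exp (-α*t) := by
    funext t; rw [Real.rpow_natCast, neg_mul]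
  rw [heq] at h
  rw [h, Real.Gamma_nat_eq_factorial]
  have hcast : ((k:ℝ)+1) = ((k+1 : ℕ):ℝ) := by push_cast; ring
  rw [hcast, Real.rpow_natCast]
  have hαne : α ≠ 0 := ne_of_gt hα
  field_simp
  rw [one_div, inv_pow]; field_simp
  ring

lemma analytic_bound {x : ℝ} (hx0 : 0 < x) (hx1 : x < 1) (k N : ℕ) :
    (∑ m ∈ range (N+1), ((m:ℝ)+1)^k * (x^(m+1) - x^(m+2))) + ((N:ℝ)+1)^k * x^(N+2)
      ≤ (k.factorial : ℝ) / (Real.log (1/x))^k := by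
  set α := Real.log (1/x) with hα
  have hαpos : 0 < α := Real.log_pos (by rw [lt_div_iff₀ hx0]; linarith)
  have hxe : ∀ j : ℕ, x ^ j = Real.exp (-α * (j:ℝ)) := by
    intro j
    have hx : x = Real.exp (-α) := by
      rw [hα, one_div, Real.log_inv, neg_neg, Real.exp_log hx0]
    rw [hx, ← Real.exp_nat_mul]
    ring_nf
  set f : ℝ → ℝ := fun t => α * (t^k * Real.exp (-α * t)) with hf
  have hfc : Continuous f := by
    apply Continuous.mul continuous_const
    exact (continuous_pow k).mul (Real.continuous_exp.comp (by continuity))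
  have hglobal : IntegrableOn f (Set.Ioi (0:ℝ)) volume := integrableOn_poly_exp hαpos k
  have hterm : ∀ m : ℕ, ((m:ℝ)+1)^k * (x^(m+1) - x^(m+2))
      ≤ ∫ t in ((m:ℝ)+1)..((m:ℝ)+2), f t := by
    intro m
    have h1 : ((m:ℝ)+1)^k * (x^(m+1) - x^(m+2))
        = ∫ t in ((m:ℝ)+1)..((m:ℝ)+2), ((m:ℝ)+1)^k * (α * Real.exp (-α * t)) := by
      rw [intervalIntegral.integral_const_mul, exp_interval_integral,
        hxe (m+1), hxe (m+2)]
      push_cast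
      ring_nf
    rw [h1]
    apply intervalIntegral.integral_mono_on (by linarith)
    · exact (Continuous.mul continuous_const (by continuity)).intervalIntegrable _ _
    · exact hfc.intervalIntegrable _ _
    · intro t ht
      rw [Set.mem_Icc] at ht
      have h2 : ((m:ℝ)+1)^k ≤ t^k := pow_le_pow_left₀ (by positivity) (by linarith) k
      have h3 := Real.exp_pos (-α*t)
      have h4 := mul_le_mul_of_nonneg_right h2 h3.le
      simp only [hf]
      nlinarith
  have hsum : ∑ m ∈ range (N+1), ∫ t in ((m:ℝ)+1)..((m:ℝ)+2), f t
      = ∫ t in (1:ℝ)..((N:ℝ)+2), f t := by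
    have h := intervalIntegral.sum_integral_adjacent_intervals
      (a := fun i : ℕ => (i:ℝ)+1) (n := N+1) (f := f) (μ := volume)
      (fun i _ => hfc.intervalIntegrable _ _)
    push_cast at h
    have e0 : (0:ℝ) + 1 = 1 := by norm_num
    have eN : (N:ℝ) + 1 + 1 = (N:ℝ) + 2 := by ring
    rw [e0, eN] at h
    rw [← h]
    apply Finset.sum_congr rfl
    intro m _
    have em : (m:ℝ) + 1 + 1 = (m:ℝ) + 2 := by ring
    rw [em]
  have hIoc : ∫ t in (1:ℝ)..((N:ℝ)+2), f t = ∫ t in Set.Ioc (1:ℝ) ((N:ℝ)+2), f t :=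
    intervalIntegral.integral_of_le (by have : (0:ℝ) ≤ (N:ℝ) := Nat.cast_nonneg N; linarith)
  have hmono : ∫ t in Set.Ioc (1:ℝ) ((N:ℝ)+2), f t ≤ ∫ t in Set.Ioc (0:ℝ) ((N:ℝ)+2), f t := by
    apply setIntegral_mono_set
    · exact hglobal.mono_set Set.Ioc_subset_Ioi_self
    · rw [EventuallyLE, ae_restrict_iff' measurableSet_Ioc]
      refine Eventually.of_forall fun t ht => ?_
      have h1 : 0 < t := ht.1
      simp only [hf, Pi.zero_apply]
      positivity
    · exact HasSubset.Subset.eventuallyLE (Set.Ioc_subset_Ioc_left (by linarith))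
  have htail : ((N:ℝ)+1)^k * x^(N+2) ≤ ∫ t in Set.Ioi ((N:ℝ)+2), f t := by
    have hxv : x^(N+2) = Real.exp (-α * ((N:ℝ)+2)) := by
      rw [hxe (N+2)]; push_cast; ring_nf
    have hcN : (0:ℝ) < (N:ℝ)+2 := by positivity
    have hint2 : IntegrableOn (fun t : ℝ => ((N:ℝ)+1)^k * (α * Real.exp (-α*t)))
        (Set.Ioi ((N:ℝ)+2)) volume := by
      have h00 := (integrableOn_poly_exp hαpos 0).mono_set
        (Set.Ioi_subset_Ioi hcN.le)
      simp only [pow_zero, one_mul] at h00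
      exact h00.const_mul (((N:ℝ)+1)^k)
    have heq1 : ∫ t in Set.Ioi ((N:ℝ)+2), ((N:ℝ)+1)^k * (α * Real.exp (-α*t))
        = ((N:ℝ)+1)^k * x^(N+2) := by
      rw [integral_const_mul, exp_Ioi_integral hαpos, hxv]
    rw [← heq1]
    apply setIntegral_mono_on hint2
      (hglobal.mono_set (Set.Ioi_subset_Ioi hcN.le)) measurableSet_Ioi
    intro t ht
    rw [Set.mem_Ioi] at ht
    have h2 : ((N:ℝ)+1)^k ≤ t^k := pow_le_pow_left₀ (by positivity) (by linarith) k
    have h3 := Real.exp_pos (-α*t)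
    have h4 := mul_le_mul_of_nonneg_right h2 h3.le
    simp only [hf]
    nlinarith
  have hsplit : (∫ t in Set.Ioc (0:ℝ) ((N:ℝ)+2), f t) + ∫ t in Set.Ioi ((N:ℝ)+2), f t
      = ∫ t in Set.Ioi (0:ℝ), f t := by
    rw [← setIntegral_union (Set.Ioc_disjoint_Ioi le_rfl) measurableSet_Ioi
      (hglobal.mono_set Set.Ioc_subset_Ioi_self)
      (hglobal.mono_set (Set.Ioi_subset_Ioi (by positivity)))]
    rw [Set.Ioc_union_Ioi_eq_Ioi (by positivity)]
  have hfinal : ∫ t in Set.Ioi (0:ℝ), f t = (k.factorial : ℝ) / α^k :=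
    integral_poly_exp hαpos k
  calc (∑ m ∈ range (N+1), ((m:ℝ)+1)^k * (x^(m+1) - x^(m+2))) + ((N:ℝ)+1)^k * x^(N+2)
      ≤ (∑ m ∈ range (N+1), ∫ t in ((m:ℝ)+1)..((m:ℝ)+2), f t) + ∫ t in Set.Ioi ((N:ℝ)+2), f t := by
        apply add_le_add (Finset.sum_le_sum fun m _ => hterm m) htail
    _ = (∫ t in Set.Ioc (1:ℝ) ((N:ℝ)+2), f t) + ∫ t in Set.Ioi ((N:ℝ)+2), f t := by
        rw [hsum, hIoc]
    _ ≤ (∫ t in Set.Ioc (0:ℝ) ((N:ℝ)+2), f t) + ∫ t in Set.Ioi ((N:ℝ)+2), f t := by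
        apply add_le_add_left hmono
    _ = (k.factorial : ℝ) / α^k := by rw [hsplit, hfinal]
lemma tele_sum (x : ℝ) : ∀ (L a : ℕ), a ≤ L →
    (∑ m ∈ range (L+1), if a ≤ m then x^(m+1) - x^(m+2) else 0) = x^(a+1) - x^(L+2) := by
  intro L
  induction L with
  | zero =>
    intro a ha
    interval_cases a
    simp
  | succ L ih =>
    intro a ha
    rw [Finset.sum_range_succ]
    by_cases hc : a ≤ L
    · rw [ih a hc, if_pos (by omega)]
      ring
    · have ha' : a = L+1 := by omega
      subst ha'
      rw [if_pos le_rfl]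
      rw [Finset.sum_eq_zero (fun m hm => by rw [if_neg (by rw [mem_range] at hm; omega)])]
      ring


end Aux

open Finset in
open scoped ENNReal in
/-- Bound on the `k`-th moment of `Y`: `E[Y^k] ≤ 2·k!/α^k` where
`α = log(1/√(1-p²))`. -/
theorem stmt7 (p : ℝ) (hp0 : 0 < p) (hp1 : p < 1) (N k : ℕ) :
    (∫ ω, ((Ycount N ω : ℝ)) ^ k ∂ prodBern p N) ≤
      2 * (Nat.factorial k : ℝ) / Real.log (1 / Real.sqrt (1 - p ^ 2)) ^ k := by
  classical
  haveI : IsProbabilityMeasure (bern p) := bern_isProb p hp0.le hp1.le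
  haveI hPM : IsProbabilityMeasure (prodBern p N) := by
    unfold prodBern; infer_instance
  set x := Real.sqrt (1 - p^2) with hxdef
  have h1p2 : (0:ℝ) < 1 - p^2 := by nlinarith
  have hx0 : 0 < x := Real.sqrt_pos.mpr h1p2
  have hx1 : x < 1 := by
    have hxs : x^2 < 1 := by
      rw [hxdef, Real.sq_sqrt h1p2.le]
      nlinarith
    nlinarith [hx0, sq_nonneg (x-1)]
  have hαpos : 0 < Real.log (1/x) := Real.log_pos (by rw [lt_div_iff₀ hx0]; linarith)
  have hfacpos : (0:ℝ) < (Nat.factorial k : ℝ) / Real.log (1/x) ^ k := by positivity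
  rcases Nat.eq_zero_or_pos k with hk | hk
  · subst hk
    simp only [pow_zero, Nat.factorial_zero, Nat.cast_one]
    rw [MeasureTheory.integral_const]
    simp [measure_univ]
  · haveI : Nonempty (Fin k) := ⟨⟨0, hk⟩⟩
    rw [moment_eq hp0 hp1 N k]
    set P := Fintype.piFinset (fun _ : Fin k => range (N+1)) with hP
    have hle1 : ∀ g ∈ P, (prodBern p N (⋂ i, {ω | ¬ inSumset ω (g i)})).toReal
        ≤ x ^ ((univ : Finset (Fin k)).sup g + 1) := by
      intro g hg
      obtain ⟨i0, _, hsup⟩ := Finset.exists_mem_eq_sup univ univ_nonempty g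
      have hgN : g i0 ≤ N := by
        have hmem := (Fintype.mem_piFinset.mp hg) i0
        rw [mem_range] at hmem
        omega
      have hsubset : (⋂ i, {ω : Fin (N+1) → Bool | ¬ inSumset ω (g i)})
          ⊆ {ω | ¬ inSumset ω (g i0)} := Set.iInter_subset _ i0
      have hb := (measure_mono hsubset).trans (marginal_bound hp0 hp1 hgN)
      rw [hsup]
      exact ENNReal.toReal_le_of_le_ofReal (by positivity) hb
    have hcard : ∀ m, m ≤ N →
        (P.filter (fun g => (univ : Finset (Fin k)).sup g ≤ m)).card = (m+1)^k := by
      intro m hm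
      have hfe : P.filter (fun g => (univ : Finset (Fin k)).sup g ≤ m)
          = Fintype.piFinset (fun _ : Fin k => range (m+1)) := by
        ext g
        simp only [mem_filter, hP, Fintype.mem_piFinset, mem_range, Finset.sup_le_iff,
          mem_univ, forall_const]
        constructor
        · rintro ⟨h1, h2⟩ i
          have := h2 i
          omega
        · intro hgi
          exact ⟨fun i => by have := hgi i; omega, fun i => by have := hgi i; omega⟩
      rw [hfe, Fintype.card_piFinset]
      simp [card_range]
    have hsupN : ∀ g ∈ P, (univ : Finset (Fin k)).sup g ≤ N := by
      intro g hg
      rw [Finset.sup_le_iff]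
      intro i _
      have hmem := (Fintype.mem_piFinset.mp hg) i
      rw [mem_range] at hmem
      omega
    have step2 : (∑ g ∈ P, x ^ ((univ : Finset (Fin k)).sup g + 1))
        = (∑ m ∈ range (N+1), ((m:ℝ)+1)^k * (x^(m+1) - x^(m+2))) + ((N:ℝ)+1)^k * x^(N+2) := by
      have hdec : ∀ g ∈ P, x ^ ((univ : Finset (Fin k)).sup g + 1)
          = (∑ m ∈ range (N+1), if (univ : Finset (Fin k)).sup g ≤ m
              then x^(m+1) - x^(m+2) else 0) + x^(N+2) := by
        intro g hg
        rw [tele_sum x N _ (hsupN g hg)]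
        ring
      rw [Finset.sum_congr rfl hdec, Finset.sum_add_distrib]
      congr 1
      · rw [Finset.sum_comm]
        apply Finset.sum_congr rfl
        intro m hm
        rw [← Finset.sum_filter, Finset.sum_const,
          hcard m (by rw [mem_range] at hm; omega), nsmul_eq_mul]
        push_cast
        ring
      · rw [Finset.sum_const]
        have hPc : P.card = (N+1)^k := by
          rw [hP, Fintype.card_piFinset]
          simp [card_range]
        rw [hPc, nsmul_eq_mul]
        push_cast
        ring
    calc (∑ g ∈ P, (prodBern p N (⋂ i, {ω | ¬ inSumset ω (g i)})).toReal)
        ≤ ∑ g ∈ P, x ^ ((univ : Finset (Fin k)).sup g + 1) := Finset.sum_le_sum hle1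
      _ = (∑ m ∈ range (N+1), ((m:ℝ)+1)^k * (x^(m+1) - x^(m+2))) + ((N:ℝ)+1)^k * x^(N+2) := step2
      _ ≤ (Nat.factorial k : ℝ) / Real.log (1/x) ^ k := analytic_bound hx0 hx1 k N
      _ ≤ 2 * (Nat.factorial k : ℝ) / Real.log (1/x) ^ k := by
          rw [mul_div_assoc]
          linarith
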